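/- For σ > 0, γ > 0 and every natural number n, the even moments of the Dual Voigt(γ, σ²) distribution equal the corresponding moments of the N(−γ/σ², 1/σ²) distribution truncated below at 0: ∫_ℝ u^{2n} p'(u) du = ∫_0^∞ u^{2n} · [1/(1 − Φ(γ/σ))] · (σ/√(2π)) · e^{−(σ²/2)(u + γ/σ²)²} du, and both integrals are finite. -/
import Mathlib


open MeasureTheory ProbabilityTheory Real

/-- The standard normal cumulative distribution function. -/
noncomputable def stdNormalCDF (t : ℝ) : ℝ :=
  ∫ s in Set.Iic t, (1 / Real.sqrt (2 * π)) * Real.exp (-s ^ 2 / 2)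

/-- The Dual Voigt(γ, σ²) density. -/
noncomputable def dualVoigtDensity (σ γ : ℝ) (u : ℝ) : ℝ :=
  1 / (2 * (1 - stdNormalCDF (γ / σ))) * (σ / Real.sqrt (2 * π)) *
    Real.exp (-γ ^ 2 / (2 * σ ^ 2)) * Real.exp (-γ * |u| - σ ^ 2 * u ^ 2 / 2)

/-- the even moments of the Dual Voigt(γ, σ²) distribution equal the
corresponding moments of the N(−γ/σ², 1/σ²) distribution truncated below at 0, and both
integrals are finite. -/
theorem dualVoigt_even_moments (σ γ : ℝ) (hσ : 0 < σ) (hγ : 0 < γ) (n : ℕ) :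
    Integrable (fun u : ℝ => u ^ (2 * n) * dualVoigtDensity σ γ u) ∧
    IntegrableOn (fun u : ℝ => u ^ (2 * n) *
      (1 / (1 - stdNormalCDF (γ / σ)) * (σ / Real.sqrt (2 * π)) *
        Real.exp (-(σ ^ 2 / 2) * (u + γ / σ ^ 2) ^ 2))) (Set.Ioi 0) ∧
    (∫ u : ℝ, u ^ (2 * n) * dualVoigtDensity σ γ u) =
      ∫ u in Set.Ioi (0 : ℝ), u ^ (2 * n) *
        (1 / (1 - stdNormalCDF (γ / σ)) * (σ / Real.sqrt (2 * π)) *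
          Real.exp (-(σ ^ 2 / 2) * (u + γ / σ ^ 2) ^ 2)) := by
  have hb : (0:ℝ) < σ ^ 2 / 2 := by positivity
  set C : ℝ := 1 / (2 * (1 - stdNormalCDF (γ / σ))) * (σ / Real.sqrt (2 * π)) *
      Real.exp (-γ ^ 2 / (2 * σ ^ 2)) with hC
  set K : ℝ := 1 / (1 - stdNormalCDF (γ / σ)) * (σ / Real.sqrt (2 * π)) with hK
  set f : ℝ → ℝ := fun u => u ^ (2 * n) * Real.exp (-γ * u - σ ^ 2 * u ^ 2 / 2) with hf
  set G : ℝ → ℝ := fun u => u ^ (2 * n) * Real.exp (-γ * |u| - σ ^ 2 * u ^ 2 / 2) with hGdef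
  have hGabs : ∀ u : ℝ, f |u| = G u := by
    intro u
    simp only [hf, hGdef, pow_mul, sq_abs]
  -- integrability of the dominating Gaussian
  have hdom : Integrable (fun x : ℝ => x ^ (2 * n) * Real.exp (-(σ ^ 2 / 2) * x ^ 2)) := by
    have h := integrable_rpow_mul_exp_neg_mul_sq hb (s := ((2 * n : ℕ) : ℝ))
      (by have : (0:ℝ) ≤ ((2 * n : ℕ) : ℝ) := Nat.cast_nonneg _; linarith)
    simp only [Real.rpow_natCast] at h
    exact h
  have hG : Integrable G := by
    refine hdom.mono' (Continuous.aestronglyMeasurable (by fun_prop)) ?_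
    refine Filter.Eventually.of_forall fun u => ?_
    have h1 : (0:ℝ) ≤ u ^ (2 * n) := by rw [pow_mul]; positivity
    simp only [hGdef]
    rw [Real.norm_eq_abs, abs_mul, abs_of_nonneg h1, abs_of_nonneg (Real.exp_pos _).le]
    refine mul_le_mul_of_nonneg_left (Real.exp_le_exp.mpr ?_) h1
    nlinarith [mul_nonneg hγ.le (abs_nonneg u)]
  -- exponent identity
  have hexp : ∀ u : ℝ, Real.exp (-(σ ^ 2 / 2) * (u + γ / σ ^ 2) ^ 2) =
      Real.exp (-γ ^ 2 / (2 * σ ^ 2)) * Real.exp (-γ * u - σ ^ 2 * u ^ 2 / 2) := by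
    intro u
    rw [← Real.exp_add]
    congr 1
    have hσ2 : (σ:ℝ) ^ 2 ≠ 0 := by positivity
    field_simp
    ring
  -- part 1
  have part1 : Integrable (fun u : ℝ => u ^ (2 * n) * dualVoigtDensity σ γ u) := by
    refine (hG.const_mul C).congr (Filter.Eventually.of_forall fun u => ?_)
    simp only [hGdef, hC, dualVoigtDensity]
    ring
  -- part 2
  have part2 : IntegrableOn (fun u : ℝ => u ^ (2 * n) *
      (1 / (1 - stdNormalCDF (γ / σ)) * (σ / Real.sqrt (2 * π)) *
        Real.exp (-(σ ^ 2 / 2) * (u + γ / σ ^ 2) ^ 2))) (Set.Ioi 0) := by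
    have h := (hG.integrableOn (s := Set.Ioi 0)).const_mul
      (K * Real.exp (-γ ^ 2 / (2 * σ ^ 2)))
    refine IntegrableOn.congr_fun h (fun u hu => ?_) measurableSet_Ioi
    rw [hexp u]
    simp only [hGdef, hK]
    rw [abs_of_pos (Set.mem_Ioi.mp hu)]
    ring
  -- the constant identity
  have hC2 : 2 * C = K * Real.exp (-γ ^ 2 / (2 * σ ^ 2)) := by
    have h2x : 2 * (1 / (2 * (1 - stdNormalCDF (γ / σ)))) = 1 / (1 - stdNormalCDF (γ / σ)) := by
      rcases eq_or_ne (1 - stdNormalCDF (γ / σ)) 0 with h | h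
      · simp [h]
      · field_simp
    rw [hC, hK]
    linear_combination (σ / Real.sqrt (2 * π) * Real.exp (-γ ^ 2 / (2 * σ ^ 2))) * h2x
  refine ⟨part1, part2, ?_⟩
  calc (∫ u : ℝ, u ^ (2 * n) * dualVoigtDensity σ γ u)
      = ∫ u : ℝ, C * G u := by
        refine integral_congr_ae (Filter.Eventually.of_forall fun u => ?_)
        simp only [hGdef, hC, dualVoigtDensity]
        ring
    _ = C * ∫ u : ℝ, G u := integral_const_mul _ _
    _ = C * ∫ u : ℝ, f |u| := by
        congr 1
        exact integral_congr_ae (Filter.Eventually.of_forall fun u => (hGabs u).symm)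
    _ = C * (2 * ∫ u in Set.Ioi (0:ℝ), f u) := by rw [integral_comp_abs]
    _ = ∫ u in Set.Ioi (0:ℝ), (2 * C) * f u := by
        rw [integral_const_mul]; ring
    _ = ∫ u in Set.Ioi (0 : ℝ), u ^ (2 * n) *
        (1 / (1 - stdNormalCDF (γ / σ)) * (σ / Real.sqrt (2 * π)) *
          Real.exp (-(σ ^ 2 / 2) * (u + γ / σ ^ 2) ^ 2)) := by
        refine setIntegral_congr_fun measurableSet_Ioi (fun u hu => ?_)
        rw [hexp u, hC2]
        simp only [hf, hK]
        ring
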